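/- Suppose R_M ⫫ (M, Y) | (X, A) and R_Y ⫫ Y | (X, A, M, R_M). Then (R_M, R_Y) ⫫ Y | (X, A, M). (That is, the 'second statement' of Assumption S1 implies its 'first statement' component S1-2.) -/

import Mathlib

open scoped Classical

noncomputable def Pr {Ω : Type*} [Fintype Ω] (p : Ω → ℝ) (E : Ω → Prop) : ℝ :=
  ∑ ω, if E ω then p ω else 0

noncomputable def cPr {Ω : Type*} [Fintype Ω] (p : Ω → ℝ) (E F : Ω → Prop) : ℝ :=
  Pr p (fun ω => E ω ∧ F ω) / Pr p F

noncomputable def odds {Ω : Type*} [Fintype Ω] (p : Ω → ℝ) (E F : Ω → Prop) : ℝ :=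
  cPr p E F / cPr p (fun ω => ¬ E ω) F

lemma Pr_congr {Ω : Type*} [Fintype Ω] (p : Ω → ℝ) {E F : Ω → Prop}
    (h : ∀ ω, E ω ↔ F ω) : Pr p E = Pr p F :=
  Finset.sum_congr rfl fun ω _ => by simp [h ω]

lemma Pr_mono {Ω : Type*} [Fintype Ω] {p : Ω → ℝ} (hp : ∀ ω, 0 ≤ p ω)
    {E F : Ω → Prop} (h : ∀ ω, E ω → F ω) : Pr p E ≤ Pr p F := by
  refine Finset.sum_le_sum fun ω _ => ?_
  by_cases hE : E ω
  · simp [hE, h ω hE]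
  · by_cases hF : F ω <;> simp [hE, hF, hp ω]

lemma Pr_marg {Ω V : Type*} [Fintype Ω] (p : Ω → ℝ) (f : Ω → V) (E : Ω → Prop) :
    ∑ v ∈ Finset.univ.image f, Pr p (fun ω => E ω ∧ f ω = v) = Pr p E := by
  unfold Pr
  rw [Finset.sum_comm]
  refine Finset.sum_congr rfl fun ω _ => ?_
  by_cases hE : E ω
  · simp only [hE, true_and]
    rw [Finset.sum_eq_single (f ω)]
    · simp
    · intro v _ hv; exact if_neg fun h => hv h.symm
    · intro h; exact absurd (Finset.mem_image_of_mem f (Finset.mem_univ ω)) h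
  · simp [hE]

/-- The second statement of Assumption S1 implies its first-statement component S1-2:
`(R_M, R_Y) ⫫ Y ∣ (X, A, M)`. -/
theorem S1_second_implies_S1_2
    {Ω 𝒳 𝒜 ℳ 𝒴 ρM ρY : Type*} [Fintype Ω]
    (p : Ω → ℝ) (hp : ∀ ω, 0 ≤ p ω) (hsum : ∑ ω, p ω = 1)
    (X : Ω → 𝒳) (A : Ω → 𝒜) (M : Ω → ℳ) (Y : Ω → 𝒴) (RM : Ω → ρM) (RY : Ω → ρY)
    -- R_M ⫫ (M, Y) ∣ (X, A)
    (h1 : ∀ (rm : ρM) (m : ℳ) (y : 𝒴) (x : 𝒳) (a : 𝒜),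
      0 < Pr p (fun ω => X ω = x ∧ A ω = a) →
      cPr p (fun ω => RM ω = rm ∧ M ω = m ∧ Y ω = y) (fun ω => X ω = x ∧ A ω = a)
        = cPr p (fun ω => RM ω = rm) (fun ω => X ω = x ∧ A ω = a)
          * cPr p (fun ω => M ω = m ∧ Y ω = y) (fun ω => X ω = x ∧ A ω = a))
    -- R_Y ⫫ Y ∣ (X, A, M, R_M)
    (h2 : ∀ (ry : ρY) (y : 𝒴) (x : 𝒳) (a : 𝒜) (m : ℳ) (rm : ρM),
      0 < Pr p (fun ω => X ω = x ∧ A ω = a ∧ M ω = m ∧ RM ω = rm) →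
      cPr p (fun ω => RY ω = ry ∧ Y ω = y)
          (fun ω => X ω = x ∧ A ω = a ∧ M ω = m ∧ RM ω = rm)
        = cPr p (fun ω => RY ω = ry) (fun ω => X ω = x ∧ A ω = a ∧ M ω = m ∧ RM ω = rm)
          * cPr p (fun ω => Y ω = y) (fun ω => X ω = x ∧ A ω = a ∧ M ω = m ∧ RM ω = rm))
    -- positivity of all conditioning events involved
    (hpos : ∀ (x : 𝒳) (a : 𝒜) (m : ℳ) (rm : ρM),
      0 < Pr p (fun ω => X ω = x ∧ A ω = a ∧ M ω = m ∧ RM ω = rm)) :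
    -- (R_M, R_Y) ⫫ Y ∣ (X, A, M)
    ∀ (rm : ρM) (ry : ρY) (y : 𝒴) (x : 𝒳) (a : 𝒜) (m : ℳ),
      0 < Pr p (fun ω => X ω = x ∧ A ω = a ∧ M ω = m) →
      cPr p (fun ω => RM ω = rm ∧ RY ω = ry ∧ Y ω = y)
          (fun ω => X ω = x ∧ A ω = a ∧ M ω = m)
        = cPr p (fun ω => RM ω = rm ∧ RY ω = ry) (fun ω => X ω = x ∧ A ω = a ∧ M ω = m)
          * cPr p (fun ω => Y ω = y) (fun ω => X ω = x ∧ A ω = a ∧ M ω = m) := by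
  
  intro rm ry y x a m hC
  have hD := hpos x a m rm
  have hPB : 0 < Pr p (fun ω => X ω = x ∧ A ω = a) :=
    lt_of_lt_of_le hD (Pr_mono hp fun ω h => ⟨h.1, h.2.1⟩)
  have hPBne := ne_of_gt hPB
  have hPDne := ne_of_gt hD
  have hPCne := ne_of_gt hC
  -- from h1, cleared of denominators
  have key : ∀ y' : 𝒴,
      Pr p (fun ω => (RM ω = rm ∧ M ω = m ∧ Y ω = y') ∧ (X ω = x ∧ A ω = a))
        * Pr p (fun ω => X ω = x ∧ A ω = a)
      = Pr p (fun ω => RM ω = rm ∧ (X ω = x ∧ A ω = a))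
        * Pr p (fun ω => (M ω = m ∧ Y ω = y') ∧ (X ω = x ∧ A ω = a)) := by
    intro y'
    have h := h1 rm m y' x a hPB
    unfold cPr at h
    field_simp at h
    exact mul_right_cancel₀ hPBne (by linear_combination (Pr p (fun ω => X ω = x ∧ A ω = a)) * h)
  -- marginalize over y' : Pr D * Pr B = Pr (RM ∧ B) * Pr C
  have sum1 :
      Pr p (fun ω => X ω = x ∧ A ω = a ∧ M ω = m ∧ RM ω = rm)
        * Pr p (fun ω => X ω = x ∧ A ω = a)
      = Pr p (fun ω => RM ω = rm ∧ (X ω = x ∧ A ω = a))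
        * Pr p (fun ω => X ω = x ∧ A ω = a ∧ M ω = m) := by
    rw [← Pr_marg p Y (fun ω => X ω = x ∧ A ω = a ∧ M ω = m ∧ RM ω = rm),
        ← Pr_marg p Y (fun ω => X ω = x ∧ A ω = a ∧ M ω = m),
        Finset.sum_mul, Finset.mul_sum]
    refine Finset.sum_congr rfl fun v _ => ?_
    rw [Pr_congr p (show ∀ ω,
          ((X ω = x ∧ A ω = a ∧ M ω = m ∧ RM ω = rm) ∧ Y ω = v)
            ↔ ((RM ω = rm ∧ M ω = m ∧ Y ω = v) ∧ (X ω = x ∧ A ω = a))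
          from fun ω => by tauto),
        Pr_congr p (show ∀ ω,
          ((X ω = x ∧ A ω = a ∧ M ω = m) ∧ Y ω = v)
            ↔ ((M ω = m ∧ Y ω = v) ∧ (X ω = x ∧ A ω = a))
          from fun ω => by tauto)]
    exact key v
  -- specialization at y : Pr (Y ∧ D) * Pr B = Pr (RM ∧ B) * Pr (Y ∧ C)
  have fact2 :
      Pr p (fun ω => Y ω = y ∧ (X ω = x ∧ A ω = a ∧ M ω = m ∧ RM ω = rm))
        * Pr p (fun ω => X ω = x ∧ A ω = a)
      = Pr p (fun ω => RM ω = rm ∧ (X ω = x ∧ A ω = a))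
        * Pr p (fun ω => Y ω = y ∧ (X ω = x ∧ A ω = a ∧ M ω = m)) := by
    rw [Pr_congr p (show ∀ ω,
          (Y ω = y ∧ (X ω = x ∧ A ω = a ∧ M ω = m ∧ RM ω = rm))
            ↔ ((RM ω = rm ∧ M ω = m ∧ Y ω = y) ∧ (X ω = x ∧ A ω = a))
          from fun ω => by tauto),
        Pr_congr p (show ∀ ω,
          (Y ω = y ∧ (X ω = x ∧ A ω = a ∧ M ω = m))
            ↔ ((M ω = m ∧ Y ω = y) ∧ (X ω = x ∧ A ω = a))
          from fun ω => by tauto)]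
    exact key y
  -- from h2
  have fact3 :
      Pr p (fun ω => (RY ω = ry ∧ Y ω = y) ∧ (X ω = x ∧ A ω = a ∧ M ω = m ∧ RM ω = rm))
        * Pr p (fun ω => X ω = x ∧ A ω = a ∧ M ω = m ∧ RM ω = rm)
      = Pr p (fun ω => RY ω = ry ∧ (X ω = x ∧ A ω = a ∧ M ω = m ∧ RM ω = rm))
        * Pr p (fun ω => Y ω = y ∧ (X ω = x ∧ A ω = a ∧ M ω = m ∧ RM ω = rm)) := by
    have h := h2 ry y x a m rm hD
    unfold cPr at h
    field_simp at h
    exact mul_right_cancel₀ hPDne (by linear_combination (Pr p (fun ω => X ω = x ∧ A ω = a ∧ M ω = m ∧ RM ω = rm)) * h)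
  -- rewrite goal numerators into D-form and finish
  unfold cPr
  rw [Pr_congr p (show ∀ ω,
        ((RM ω = rm ∧ RY ω = ry ∧ Y ω = y) ∧ (X ω = x ∧ A ω = a ∧ M ω = m))
          ↔ ((RY ω = ry ∧ Y ω = y) ∧ (X ω = x ∧ A ω = a ∧ M ω = m ∧ RM ω = rm))
        from fun ω => by tauto),
      Pr_congr p (show ∀ ω,
        ((RM ω = rm ∧ RY ω = ry) ∧ (X ω = x ∧ A ω = a ∧ M ω = m))
          ↔ (RY ω = ry ∧ (X ω = x ∧ A ω = a ∧ M ω = m ∧ RM ω = rm))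
        from fun ω => by tauto)]
  have main :
      Pr p (fun ω => (RY ω = ry ∧ Y ω = y) ∧ (X ω = x ∧ A ω = a ∧ M ω = m ∧ RM ω = rm))
        * Pr p (fun ω => X ω = x ∧ A ω = a ∧ M ω = m)
      = Pr p (fun ω => RY ω = ry ∧ (X ω = x ∧ A ω = a ∧ M ω = m ∧ RM ω = rm))
        * Pr p (fun ω => Y ω = y ∧ (X ω = x ∧ A ω = a ∧ M ω = m)) := by
    apply mul_right_cancel₀ hPDne
    apply mul_right_cancel₀ hPBne
    linear_combination
      Pr p (fun ω => X ω = x ∧ A ω = a ∧ M ω = m)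
        * Pr p (fun ω => X ω = x ∧ A ω = a) * fact3
      + Pr p (fun ω => RY ω = ry ∧ (X ω = x ∧ A ω = a ∧ M ω = m ∧ RM ω = rm))
        * Pr p (fun ω => X ω = x ∧ A ω = a ∧ M ω = m) * fact2
      - Pr p (fun ω => RY ω = ry ∧ (X ω = x ∧ A ω = a ∧ M ω = m ∧ RM ω = rm))
        * Pr p (fun ω => Y ω = y ∧ (X ω = x ∧ A ω = a ∧ M ω = m)) * sum1
  field_simp
  linear_combination main
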